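/- For any coprime positive integers a and c, one has s(c,a;1/2,1/2) + s(a - c, 2a) + s(c,a) = 0. -/

import Mathlib

open Finset Real

open Classical in
/-- The sawtooth function: 0 on integers, fractional part minus 1/2 otherwise. -/
noncomputable def saw (x : ℝ) : ℝ :=
  if ∃ n : ℤ, x = n then 0 else Int.fract x - 1/2

/-- The Dedekind sum s(q,p). -/
noncomputable def dedekindSum (q : ℤ) (p : ℕ) : ℝ :=
  ∑ μ ∈ Finset.range p, saw ((μ : ℝ) / p) * saw ((q : ℝ) * μ / p)

/-- The Dedekind–Rademacher sum s(q,p;x,y). -/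
noncomputable def drSum (q : ℤ) (p : ℕ) (x y : ℝ) : ℝ :=
  ∑ μ ∈ Finset.range p, saw (((μ : ℝ) + y) / p) * saw ((q : ℝ) * ((μ : ℝ) + y) / p + x)

lemma saw_add_int (x : ℝ) (n : ℤ) : saw (x + n) = saw x := by
  unfold saw
  have h : (∃ m : ℤ, x + (n : ℝ) = m) ↔ ∃ m : ℤ, x = m := by
    constructor
    · rintro ⟨m, hm⟩; exact ⟨m - n, by push_cast; linarith⟩
    · rintro ⟨m, hm⟩; exact ⟨m + n, by push_cast; linarith⟩
  rw [Int.fract_add_intCast]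
  split_ifs with h1 h2 h2 <;> first | rfl | tauto

lemma saw_add_nat (x : ℝ) (n : ℕ) : saw (x + n) = saw x := by
  have := saw_add_int x (n : ℤ)
  push_cast at this
  exact this

lemma saw_neg (x : ℝ) : saw (-x) = -saw x := by
  unfold saw
  by_cases hx : ∃ m : ℤ, x = m
  · obtain ⟨m, rfl⟩ := hx
    rw [if_pos ⟨-m, by push_cast; ring⟩, if_pos ⟨m, rfl⟩]
    simp
  · have hneg : ¬ ∃ m : ℤ, -x = (m : ℝ) := by
      rintro ⟨m, hm⟩; exact hx ⟨-m, by push_cast; linarith⟩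
    rw [if_neg hneg, if_neg hx, Int.fract_neg]
    · ring
    · intro h0
      exact hx ⟨⌊x⌋, by have := Int.floor_add_fract x; rw [h0, add_zero] at this; linarith⟩

lemma sum_range_two_mul (f : ℕ → ℝ) (n : ℕ) :
    ∑ i ∈ Finset.range (2 * n), f i = ∑ i ∈ Finset.range n, (f (2 * i) + f (2 * i + 1)) := by
  induction n with
  | zero => simp
  | succ n ih =>
    rw [show 2 * (n + 1) = (2 * n + 1) + 1 by omega, Finset.sum_range_succ,
      Finset.sum_range_succ, Finset.sum_range_succ, ih]
    ring

theorem dr_sum_identity (a c : ℕ) (ha : 0 < a) (hc : 0 < c) (hcop : Nat.Coprime a c) :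
    drSum (c : ℤ) a (1/2) (1/2) + dedekindSum ((a : ℤ) - c) (2 * a)
      + dedekindSum (c : ℤ) a = 0 := by
  have ha' : (a : ℝ) ≠ 0 := Nat.cast_ne_zero.mpr ha.ne'
  unfold drSum dedekindSum
  rw [sum_range_two_mul, ← Finset.sum_add_distrib, ← Finset.sum_add_distrib]
  apply Finset.sum_eq_zero
  intro ν _
  have h1 : ((2 * ν : ℕ) : ℝ) / ((2 * a : ℕ) : ℝ) = (ν : ℝ) / a := by
    push_cast; field_simp
  have h2 : ((((a : ℤ) - c : ℤ)) : ℝ) * ((2 * ν : ℕ) : ℝ) / ((2 * a : ℕ) : ℝ)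
      = -((c : ℝ) * ν / a) + (ν : ℕ) := by
    push_cast; field_simp; ring
  have h3 : ((2 * ν + 1 : ℕ) : ℝ) / ((2 * a : ℕ) : ℝ) = ((ν : ℝ) + 1/2) / a := by
    push_cast; field_simp
  have h4 : ((((a : ℤ) - c : ℤ)) : ℝ) * ((2 * ν + 1 : ℕ) : ℝ) / ((2 * a : ℕ) : ℝ)
      = -((c : ℝ) * ((ν : ℝ) + 1/2) / a + 1/2) + (ν + 1 : ℕ) := by
    push_cast; field_simp; ring
  rw [h1, h2, h3, h4, saw_add_nat, saw_add_nat, saw_neg, saw_neg]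
  push_cast
  ring
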